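/- Let f be holomorphic on an open set G ⊆ ℂ and let Γ be a positively oriented circle whose closed disc lies in G. For points c₁,…,c_{n+1} in the open disc bounded by Γ, with 0 ≤ k ≤ n, the divided difference satisfies the nesting identity Δⁿf(c₁,…,c_{n+1}) = Δᵏg(c_{n−k+1},…,c_{n+1}), where g(w) := Δ^{n−k}f(c₁,…,c_{n−k},w) is holomorphic in w on the open disc bounded by Γ. -/

import Mathlib

open Finset Metric

open Complex
-- helper: points of the sphere differ from points of the ball
lemma sphere_ne_ball_pt {w₀ ζ c : ℂ} {r : ℝ} (hζ : ζ ∈ sphere w₀ r) (hc : c ∈ ball w₀ r) :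
    ζ ≠ c := by
  intro h
  rw [mem_sphere_iff_norm] at hζ
  rw [mem_ball_iff_norm] at hc
  rw [h] at hζ
  exact absurd hζ (ne_of_lt hc)

lemma circleIntegral_add' {f g : ℂ → ℂ} {c : ℂ} {R : ℝ} (hf : CircleIntegrable f c R)
    (hg : CircleIntegrable g c R) :
    (∮ z in C(c, R), (f z + g z)) = (∮ z in C(c, R), f z) + ∮ z in C(c, R), g z := by
  have h1 : (∮ z in C(c, R), (f z - (-g z))) =
      (∮ z in C(c, R), f z) - ∮ z in C(c, R), (-g z) :=
    circleIntegral.integral_sub hf hg.neg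
  have h2 : (∮ z in C(c, R), ((-1 : ℂ) * g z)) = (-1 : ℂ) * ∮ z in C(c, R), g z :=
    circleIntegral.integral_const_mul _ _ _ _
  simp only [neg_one_mul] at h2
  simp only [sub_neg_eq_add] at h1
  rw [h1, h2]; ring

lemma cont_inv_prod {ι : Type*} {w₀ : ℂ} {r : ℝ} (b : ι → ℂ) (t : Finset ι)
    (hb : ∀ j ∈ t, b j ∈ ball w₀ r) :
    ContinuousOn (fun ζ => (∏ l ∈ t, (ζ - b l))⁻¹) (sphere w₀ r) := by
  apply ContinuousOn.inv₀
  · exact (continuous_finset_prod t fun l _ => continuous_id.sub continuous_const).continuousOn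
  · intro ζ hζ
    exact Finset.prod_ne_zero_iff.mpr fun l hl =>
      sub_ne_zero.mpr (sphere_ne_ball_pt hζ (hb l hl))

lemma zlem {ι : Type*} [DecidableEq ι] {w₀ : ℂ} {R' : ℝ} (hR' : 0 < R') (b : ι → ℂ)
    (s : Finset ι) : (∀ j ∈ s, b j ∈ ball w₀ R') → s.Nonempty →
    (∮ ζ in C(w₀, R'), (∏ j ∈ s, (ζ - b j))⁻¹) =
      if s.card = 1 then 2 * Real.pi * Complex.I else 0 := by
  induction s using Finset.strongInduction with
  | _ s IH =>
    intro hb hs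
    by_cases h1 : s.card = 1
    · rw [if_pos h1]
      obtain ⟨i, rfl⟩ := Finset.card_eq_one.mp h1
      simp only [Finset.prod_singleton]
      exact circleIntegral.integral_sub_inv_of_mem_ball (hb i (Finset.mem_singleton_self i))
    · rw [if_neg h1]
      have hcard : 2 ≤ s.card := by
        have := Finset.card_pos.mpr hs; omega
      by_cases hconst : ∀ i ∈ s, ∀ j ∈ s, b i = b j
      · -- all nodes equal
        obtain ⟨i, hi⟩ := hs
        have key : ∀ ζ : ℂ, (∏ j ∈ s, (ζ - b j))⁻¹ = (ζ - b i) ^ (-(s.card : ℤ)) := by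
          intro ζ
          rw [Finset.prod_congr rfl (fun j hj => by rw [hconst j hj i hi]),
            Finset.prod_const, zpow_neg, zpow_natCast]
        have hz : (∮ ζ in C(w₀, R'), (ζ - b i) ^ (-(s.card : ℤ))) = 0 :=
          circleIntegral.integral_sub_zpow_of_ne (by omega) w₀ (b i) R'
        rw [← hz]
        exact circleIntegral.integral_congr hR'.le fun ζ _ => key ζ
      · push_neg at hconst
        obtain ⟨i, hi, j, hj, hij⟩ := hconst
        have hji : i ≠ j := fun h => hij (by rw [h])
        have hbi := hb i hi
        have hbj := hb j hj
        have hbij : b j - b i ≠ 0 := sub_ne_zero.mpr (Ne.symm hij)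
        -- pointwise partial-fraction identity on the sphere
        have hEq : Set.EqOn (fun ζ => (∏ l ∈ s, (ζ - b l))⁻¹)
            (fun ζ => (b j - b i)⁻¹ * ((∏ l ∈ s.erase i, (ζ - b l))⁻¹
              - (∏ l ∈ s.erase j, (ζ - b l))⁻¹)) (sphere w₀ R') := by
          intro ζ hζ
          have hne : ∀ l ∈ s, ζ - b l ≠ 0 := fun l hl =>
            sub_ne_zero.mpr (sphere_ne_ball_pt hζ (hb l hl))
          have hP : (∏ l ∈ s, (ζ - b l)) ≠ 0 := Finset.prod_ne_zero_iff.mpr hne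
          have h1 : (ζ - b i) * ∏ l ∈ s.erase i, (ζ - b l) = ∏ l ∈ s, (ζ - b l) :=
            Finset.mul_prod_erase s (fun l => ζ - b l) hi
          have h2 : (ζ - b j) * ∏ l ∈ s.erase j, (ζ - b l) = ∏ l ∈ s, (ζ - b l) :=
            Finset.mul_prod_erase s (fun l => ζ - b l) hj
          have hAi : (∏ l ∈ s.erase i, (ζ - b l)) ≠ 0 :=
            Finset.prod_ne_zero_iff.mpr fun l hl => hne l (Finset.mem_of_mem_erase hl)
          have hAj : (∏ l ∈ s.erase j, (ζ - b l)) ≠ 0 :=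
            Finset.prod_ne_zero_iff.mpr fun l hl => hne l (Finset.mem_of_mem_erase hl)
          have hzi : ζ - b i ≠ 0 := hne i hi
          have hzj : ζ - b j ≠ 0 := hne j hj
          show (∏ l ∈ s, (ζ - b l))⁻¹ = (b j - b i)⁻¹ * ((∏ l ∈ s.erase i, (ζ - b l))⁻¹
              - (∏ l ∈ s.erase j, (ζ - b l))⁻¹)
          have e1 : (∏ l ∈ s.erase i, (ζ - b l))⁻¹ = (ζ - b i) * (∏ l ∈ s, (ζ - b l))⁻¹ := by
            rw [← h1, mul_inv, ← mul_assoc, mul_inv_cancel₀ hzi, one_mul]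
          have e2 : (∏ l ∈ s.erase j, (ζ - b l))⁻¹ = (ζ - b j) * (∏ l ∈ s, (ζ - b l))⁻¹ := by
            rw [← h2, mul_inv, ← mul_assoc, mul_inv_cancel₀ hzj, one_mul]
          rw [e1, e2, ← sub_mul, show ζ - b i - (ζ - b j) = b j - b i by ring, ← mul_assoc,
            inv_mul_cancel₀ hbij, one_mul]
        rw [circleIntegral.integral_congr hR'.le hEq]
        have hinti : CircleIntegrable (fun ζ => (∏ l ∈ s.erase i, (ζ - b l))⁻¹) w₀ R' :=
          (cont_inv_prod b _ fun l hl => hb l (Finset.mem_of_mem_erase hl)).circleIntegrable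
            hR'.le
        have hintj : CircleIntegrable (fun ζ => (∏ l ∈ s.erase j, (ζ - b l))⁻¹) w₀ R' :=
          (cont_inv_prod b _ fun l hl => hb l (Finset.mem_of_mem_erase hl)).circleIntegrable
            hR'.le
        rw [circleIntegral.integral_const_mul, circleIntegral.integral_sub hinti hintj]
        have hci : s.erase i ⊂ s := Finset.erase_ssubset hi
        have hcj : s.erase j ⊂ s := Finset.erase_ssubset hj
        have hnei : (s.erase i).Nonempty := by
          rw [← Finset.card_pos, Finset.card_erase_of_mem hi]; omega
        have hnej : (s.erase j).Nonempty := by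
          rw [← Finset.card_pos, Finset.card_erase_of_mem hj]; omega
        rw [IH _ hci (fun l hl => hb l (Finset.mem_of_mem_erase hl)) hnei,
          IH _ hcj (fun l hl => hb l (Finset.mem_of_mem_erase hl)) hnej,
          Finset.card_erase_of_mem hi, Finset.card_erase_of_mem hj]
        simp

lemma gdiff {w₀ : ℂ} {R : ℝ} (hR : 0 < R) (φ : ℂ → ℂ) (hφ : ContinuousOn φ (sphere w₀ R)) :
    DifferentiableOn ℂ (fun ζ => ∮ ξ in C(w₀, R), φ ξ / (ξ - ζ)) (ball w₀ R) := by
  have hint : CircleIntegrable φ w₀ R := hφ.circleIntegrable hR.le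
  lift R to NNReal using hR.le with R hRR
  have hR0 : 0 < R := by exact_mod_cast hR
  have hF := hasFPowerSeriesOn_cauchy_integral hint hR0
  have hdF := hF.differentiableOn
  rw [Metric.emetric_ball_nnreal] at hdF
  have h2πI : (2 * Real.pi * Complex.I) ≠ 0 := by
    simp [Real.pi_ne_zero, Complex.I_ne_zero]
  have heq : (fun ζ => ∮ ξ in C(w₀, (R : ℝ)), φ ξ / (ξ - ζ)) = fun ζ =>
      (2 * Real.pi * Complex.I) •
        ((2 * Real.pi * Complex.I : ℂ)⁻¹ • ∮ ξ in C(w₀, (R : ℝ)), (ξ - ζ)⁻¹ • φ ξ) := by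
    funext ζ
    rw [smul_inv_smul₀ h2πI]
    congr 1
    funext ξ
    rw [smul_eq_mul, div_eq_mul_inv, mul_comm]
  rw [heq]
  exact hdF.const_smul (2 * Real.pi * Complex.I : ℂ)

lemma sphere_ne_sphere_pt {w₀ ξ ζ : ℂ} {R R' : ℝ} (hR : R' ≠ R) (hξ : ξ ∈ sphere w₀ R)
    (hζ : ζ ∈ sphere w₀ R') : ξ - ζ ≠ 0 := by
  rw [sub_ne_zero]
  intro h
  rw [mem_sphere] at hξ hζ
  rw [h, hζ] at hξ
  exact hR hξ

lemma keylem {w₀ : ℂ} {R R' : ℝ} (hR' : 0 < R') (hRR' : R' < R) :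
    ∀ (m : ℕ) (b : Fin (m + 1) → ℂ), (∀ j, b j ∈ ball w₀ R') →
    ∀ (φ : ℂ → ℂ), ContinuousOn φ (sphere w₀ R) →
    (∮ ζ in C(w₀, R'), (∮ ξ in C(w₀, R), φ ξ / (ξ - ζ)) / ∏ j, (ζ - b j))
      = (2 * Real.pi * Complex.I) • ∮ ξ in C(w₀, R), φ ξ / ∏ j, (ξ - b j) := by
  have hR : 0 < R := hR'.trans hRR'
  intro m
  induction m with
  | zero =>
    intro b hb φ hφ
    have hg : DifferentiableOn ℂ (fun ζ => ∮ ξ in C(w₀, R), φ ξ / (ξ - ζ))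
        (closure (ball w₀ R')) := by
      rw [closure_ball w₀ hR'.ne']
      exact (gdiff hR φ hφ).mono (closedBall_subset_ball hRR')
    have hc := hg.diffContOnCl.circleIntegral_sub_inv_smul (hb 0)
    calc (∮ ζ in C(w₀, R'), (∮ ξ in C(w₀, R), φ ξ / (ξ - ζ)) / ∏ j, (ζ - b j))
        = ∮ ζ in C(w₀, R'), (ζ - b 0)⁻¹ • (∮ ξ in C(w₀, R), φ ξ / (ξ - ζ)) := by
          congr 1; funext ζ
          rw [Fin.prod_univ_one, smul_eq_mul, mul_comm, div_eq_mul_inv]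
      _ = (2 * Real.pi * Complex.I) • ∮ ξ in C(w₀, R), φ ξ / (ξ - b 0) := hc
      _ = (2 * Real.pi * Complex.I) • ∮ ξ in C(w₀, R), φ ξ / ∏ j, (ξ - b j) := by
          congr 1
          exact circleIntegral.integral_congr hR.le fun ξ _ => by rw [Fin.prod_univ_one]
  | succ m IH =>
    intro b hb φ hφ
    have hβ' : b (Fin.last (m + 1)) ∈ ball w₀ R' := hb _
    have hβR : b (Fin.last (m + 1)) ∈ ball w₀ R := ball_subset_ball hRR'.le hβ'
    have hψ : ContinuousOn (fun ξ => φ ξ / (ξ - b (Fin.last (m + 1)))) (sphere w₀ R) :=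
      hφ.div (continuous_id.sub continuous_const).continuousOn
        (fun ξ hξ => sub_ne_zero.mpr (sphere_ne_ball_pt hξ hβR))
    have hb' : ∀ j : Fin (m + 1), b (Fin.castSucc j) ∈ ball w₀ R' := fun j => hb _
    have IH' := IH (fun j => b (Fin.castSucc j)) hb'
      (fun ξ => φ ξ / (ξ - b (Fin.last (m + 1)))) hψ
    -- Step A : integral identity for the shifted kernel
    have stepA : ∀ ζ ∈ sphere w₀ R',
        (∮ ξ in C(w₀, R), (φ ξ / (ξ - b (Fin.last (m + 1)))) / (ξ - ζ))
          = (ζ - b (Fin.last (m + 1)))⁻¹ * (∮ ξ in C(w₀, R), φ ξ / (ξ - ζ))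
            - (ζ - b (Fin.last (m + 1)))⁻¹ *
              (∮ ξ in C(w₀, R), φ ξ / (ξ - b (Fin.last (m + 1)))) := by
      intro ζ hζ
      have hζβ : ζ - b (Fin.last (m + 1)) ≠ 0 :=
        sub_ne_zero.mpr (sphere_ne_ball_pt hζ hβ')
      have hker : Set.EqOn (fun ξ => (φ ξ / (ξ - b (Fin.last (m + 1)))) / (ξ - ζ))
          (fun ξ => (ζ - b (Fin.last (m + 1)))⁻¹ * (φ ξ / (ξ - ζ))
            - (ζ - b (Fin.last (m + 1)))⁻¹ * (φ ξ / (ξ - b (Fin.last (m + 1)))))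
          (sphere w₀ R) := by
        intro ξ hξ
        have h1 : ξ - ζ ≠ 0 := sphere_ne_sphere_pt (ne_of_lt hRR') hξ hζ
        have h2 : ξ - b (Fin.last (m + 1)) ≠ 0 :=
          sub_ne_zero.mpr (sphere_ne_ball_pt hξ hβR)
        show (φ ξ / (ξ - b (Fin.last (m + 1)))) / (ξ - ζ) = _
        field_simp
        ring
      have hi1 : CircleIntegrable
          (fun ξ => (ζ - b (Fin.last (m + 1)))⁻¹ * (φ ξ / (ξ - ζ))) w₀ R := by
        refine (continuousOn_const.mul (hφ.div
          (continuous_id.sub continuous_const).continuousOn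
          (fun ξ hξ => sphere_ne_sphere_pt (ne_of_lt hRR') hξ hζ))).circleIntegrable hR.le
      have hi2 : CircleIntegrable
          (fun ξ => (ζ - b (Fin.last (m + 1)))⁻¹ *
            (φ ξ / (ξ - b (Fin.last (m + 1))))) w₀ R :=
        (continuousOn_const.mul hψ).circleIntegrable hR.le
      rw [circleIntegral.integral_congr hR.le hker, circleIntegral.integral_sub hi1 hi2,
        circleIntegral.integral_const_mul, circleIntegral.integral_const_mul]
    -- Step B : pointwise identity for the outer integrand on the small sphere
    have stepB : Set.EqOn
        (fun ζ => (∮ ξ in C(w₀, R), φ ξ / (ξ - ζ)) / ∏ j : Fin (m + 2), (ζ - b j))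
        (fun ζ => (∮ ξ in C(w₀, R), (φ ξ / (ξ - b (Fin.last (m + 1)))) / (ξ - ζ))
            / ∏ j : Fin (m + 1), (ζ - b (Fin.castSucc j))
          + (∮ ξ in C(w₀, R), φ ξ / (ξ - b (Fin.last (m + 1)))) *
            (∏ j : Fin (m + 2), (ζ - b j))⁻¹) (sphere w₀ R') := by
      intro ζ hζ
      have hζβ : ζ - b (Fin.last (m + 1)) ≠ 0 :=
        sub_ne_zero.mpr (sphere_ne_ball_pt hζ hβ')
      have hP : (∏ j : Fin (m + 1), (ζ - b (Fin.castSucc j))) ≠ 0 :=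
        Finset.prod_ne_zero_iff.mpr fun j _ =>
          sub_ne_zero.mpr (sphere_ne_ball_pt hζ (hb' j))
      have hsplit : (∏ j : Fin (m + 2), (ζ - b j))
          = (∏ j : Fin (m + 1), (ζ - b (Fin.castSucc j))) * (ζ - b (Fin.last (m + 1))) :=
        Fin.prod_univ_castSucc _
      dsimp only
      rw [stepA ζ hζ, hsplit]
      field_simp
      ring
    have hhcont : ContinuousOn
        (fun ζ => ∮ ξ in C(w₀, R), (φ ξ / (ξ - b (Fin.last (m + 1)))) / (ξ - ζ))
        (sphere w₀ R') :=
      ((gdiff hR _ hψ).continuousOn).mono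
        (sphere_subset_closedBall.trans (closedBall_subset_ball hRR'))
    have hint1 : CircleIntegrable
        (fun ζ => (∮ ξ in C(w₀, R), (φ ξ / (ξ - b (Fin.last (m + 1)))) / (ξ - ζ))
          / ∏ j : Fin (m + 1), (ζ - b (Fin.castSucc j))) w₀ R' := by
      refine (hhcont.div ((continuous_finset_prod _ fun j _ =>
        continuous_id.sub continuous_const).continuousOn)
        (fun ζ hζ => Finset.prod_ne_zero_iff.mpr fun j _ =>
          sub_ne_zero.mpr (sphere_ne_ball_pt hζ (hb' j)))).circleIntegrable hR'.le
    have hint2 : CircleIntegrable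
        (fun ζ => (∮ ξ in C(w₀, R), φ ξ / (ξ - b (Fin.last (m + 1)))) *
          (∏ j : Fin (m + 2), (ζ - b j))⁻¹) w₀ R' :=
      (continuousOn_const.mul (cont_inv_prod b Finset.univ fun j _ => hb j)).circleIntegrable
        hR'.le
    have hZ : (∮ ζ in C(w₀, R'), (∏ j : Fin (m + 2), (ζ - b j))⁻¹) = 0 := by
      have := zlem hR' b Finset.univ (fun j _ => hb j) Finset.univ_nonempty
      rwa [if_neg (by simp)] at this
    calc (∮ ζ in C(w₀, R'), (∮ ξ in C(w₀, R), φ ξ / (ξ - ζ)) / ∏ j : Fin (m + 2), (ζ - b j))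
        = ∮ ζ in C(w₀, R'),
            ((∮ ξ in C(w₀, R), (φ ξ / (ξ - b (Fin.last (m + 1)))) / (ξ - ζ))
              / ∏ j : Fin (m + 1), (ζ - b (Fin.castSucc j))
            + (∮ ξ in C(w₀, R), φ ξ / (ξ - b (Fin.last (m + 1)))) *
              (∏ j : Fin (m + 2), (ζ - b j))⁻¹) :=
          circleIntegral.integral_congr hR'.le stepB
      _ = (∮ ζ in C(w₀, R'),
            (∮ ξ in C(w₀, R), (φ ξ / (ξ - b (Fin.last (m + 1)))) / (ξ - ζ))
              / ∏ j : Fin (m + 1), (ζ - b (Fin.castSucc j)))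
          + (∮ ξ in C(w₀, R), φ ξ / (ξ - b (Fin.last (m + 1)))) *
            ∮ ζ in C(w₀, R'), (∏ j : Fin (m + 2), (ζ - b j))⁻¹ := by
          rw [circleIntegral_add' hint1 hint2, circleIntegral.integral_const_mul]
      _ = (2 * Real.pi * Complex.I) •
            ∮ ξ in C(w₀, R), (φ ξ / (ξ - b (Fin.last (m + 1))))
              / ∏ j : Fin (m + 1), (ξ - b (Fin.castSucc j)) := by
          rw [hZ, mul_zero, add_zero, IH']
      _ = (2 * Real.pi * Complex.I) •
            ∮ ξ in C(w₀, R), φ ξ / ∏ j : Fin (m + 2), (ξ - b j) := by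
          congr 1
          refine circleIntegral.integral_congr hR.le fun ξ _ => ?_
          conv_rhs => rw [Fin.prod_univ_castSucc, mul_comm, ← div_div]


/-- Nesting identity for divided differences: splitting the nodes into a first block
`a = (c₁,…,c_{n−k})` and a second block `b = (c_{n−k+1},…,c_{n+1})` (of `k+1` nodes),
one has `Δⁿf(c₁,…,c_{n+1}) = Δᵏg(c_{n−k+1},…,c_{n+1})` where
`g(w) := Δ^{n−k}f(c₁,…,c_{n−k},w)`.  The outer divided difference of `g` is computed
over a slightly smaller circle `C(w₀, R')` inside `C(w₀, R)`, on which `g` is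
holomorphic. -/
theorem stmt17 (G : Set ℂ) (hG : IsOpen G) (f : ℂ → ℂ) (hf : DifferentiableOn ℂ f G)
    (p k : ℕ) (w₀ : ℂ) (R R' : ℝ) (hR' : 0 < R') (hRR' : R' < R)
    (hsub : closedBall w₀ R ⊆ G)
    (a : Fin p → ℂ) (ha : ∀ i, a i ∈ ball w₀ R')
    (b : Fin (k + 1) → ℂ) (hb : ∀ j, b j ∈ ball w₀ R') :
    (2 * Real.pi * Complex.I)⁻¹ •
        (∮ ξ in C(w₀, R),
          f ξ / ((∏ i : Fin p, (ξ - a i)) * ∏ j : Fin (k + 1), (ξ - b j)))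
      = (2 * Real.pi * Complex.I)⁻¹ •
          (∮ ζ in C(w₀, R'),
            ((2 * Real.pi * Complex.I)⁻¹ •
                (∮ ξ in C(w₀, R), f ξ / ((∏ i : Fin p, (ξ - a i)) * (ξ - ζ))))
              / ∏ j : Fin (k + 1), (ζ - b j)) := by
  have hR : 0 < R := hR'.trans hRR'
  have h2πI : (2 * Real.pi * Complex.I : ℂ) ≠ 0 :=
    mul_ne_zero (mul_ne_zero two_ne_zero (Complex.ofReal_ne_zero.mpr Real.pi_ne_zero))
      Complex.I_ne_zero
  have hφ : ContinuousOn (fun ξ => f ξ / ∏ i : Fin p, (ξ - a i)) (sphere w₀ R) := by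
    refine ContinuousOn.div
      (hf.continuousOn.mono (sphere_subset_closedBall.trans hsub))
      ((continuous_finset_prod _ fun i _ =>
        continuous_id.sub continuous_const).continuousOn) ?_
    intro ξ hξ
    exact Finset.prod_ne_zero_iff.mpr fun i _ =>
      sub_ne_zero.mpr (sphere_ne_ball_pt hξ (ball_subset_ball hRR'.le (ha i)))
  have key := keylem hR' hRR' k b hb (fun ξ => f ξ / ∏ i : Fin p, (ξ - a i)) hφ
  have hL : (∮ ξ in C(w₀, R),
        f ξ / ((∏ i : Fin p, (ξ - a i)) * ∏ j : Fin (k + 1), (ξ - b j)))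
      = ∮ ξ in C(w₀, R),
        (f ξ / ∏ i : Fin p, (ξ - a i)) / ∏ j : Fin (k + 1), (ξ - b j) :=
    circleIntegral.integral_congr hR.le fun ξ _ => (div_div _ _ _).symm
  have hInner : ∀ ζ : ℂ, (∮ ξ in C(w₀, R), f ξ / ((∏ i : Fin p, (ξ - a i)) * (ξ - ζ)))
      = ∮ ξ in C(w₀, R), (f ξ / ∏ i : Fin p, (ξ - a i)) / (ξ - ζ) := fun ζ =>
    circleIntegral.integral_congr hR.le fun ξ _ => (div_div _ _ _).symm
  have hRint : (∮ ζ in C(w₀, R'),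
        ((2 * Real.pi * Complex.I)⁻¹ •
          (∮ ξ in C(w₀, R), f ξ / ((∏ i : Fin p, (ξ - a i)) * (ξ - ζ))))
          / ∏ j : Fin (k + 1), (ζ - b j))
      = (2 * Real.pi * Complex.I : ℂ)⁻¹ • ∮ ζ in C(w₀, R'),
          (∮ ξ in C(w₀, R), (f ξ / ∏ i : Fin p, (ξ - a i)) / (ξ - ζ))
            / ∏ j : Fin (k + 1), (ζ - b j) := by
    rw [← circleIntegral.integral_smul]
    exact circleIntegral.integral_congr hR'.le fun ζ _ => by
      rw [hInner ζ, smul_eq_mul, smul_eq_mul, mul_div_assoc]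
  rw [hL, hRint, key, inv_smul_smul₀ h2πI]
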